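/- Let G=(V,A) be a directed graph with nonnegative arc weights, let c be a customer vertex, and let f1, f2 be two facility vertices with c ∉ {f1,f2}. For a facility f ≠ c, let N(c,f) denote the set of out-neighbors x of c (vertices with (c,x) ∈ A) such that x lies on some shortest path from c to f. Then the pair {f1,f2} covers c in a setwise-disjoint fashion if and only if N(c,f1) ∩ N(c,f2) = ∅. -/

import Mathlib

/-- `IsDiPath A a b p` asserts that the list of vertices `p` is a simple directed
path from `a` to `b` in the directed graph with arc relation `A`. -/
def IsDiPath {V : Type*} (A : V → V → Prop) (a b : V) (p : List V) : Prop :=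
  p.head? = some a ∧ p.getLast? = some b ∧ List.Chain' A p ∧ p.Nodup

/-- The arcs traversed by a path: the list of consecutive pairs of vertices. -/
def pathArcs {V : Type*} (p : List V) : List (V × V) :=
  p.zip p.tail

/-- The total weight of a path: the sum of the weights of its arcs. -/
def pathWeight {V : Type*} (w : V → V → ℝ) (p : List V) : ℝ :=
  ((p.zip p.tail).map fun e => w e.1 e.2).sum

/-- `p` is a shortest (minimum total weight) directed path from `a` to `b`. -/
def IsShortestDiPath {V : Type*} (A : V → V → Prop) (w : V → V → ℝ) (a b : V)
    (p : List V) : Prop :=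
  IsDiPath A a b p ∧ ∀ q, IsDiPath A a b q → pathWeight w p ≤ pathWeight w q

/-- The pair `{f₁, f₂}` covers `c` in a pathwise-disjoint fashion: there are shortest
paths from `c` to `f₁` and from `c` to `f₂` with no common vertex except `c`. -/
def CoversPathwise {V : Type*} (A : V → V → Prop) (w : V → V → ℝ) (c f₁ f₂ : V) : Prop :=
  ∃ p₁ p₂, IsShortestDiPath A w c f₁ p₁ ∧ IsShortestDiPath A w c f₂ p₂ ∧
    ∀ v ∈ p₁, v ∈ p₂ → v = c

/-- The pair `{f₁, f₂}` covers `c` in a setwise-disjoint fashion: no shortest path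
from `c` to `f₁` shares a vertex other than `c` with any shortest path from `c` to `f₂`. -/
def CoversSetwise {V : Type*} (A : V → V → Prop) (w : V → V → ℝ) (c f₁ f₂ : V) : Prop :=
  ∀ p₁ p₂, IsShortestDiPath A w c f₁ p₁ → IsShortestDiPath A w c f₂ p₂ →
    ∀ v ∈ p₁, v ∈ p₂ → v = c

/-- `F'` is a pathwise-disjoint cover for the customers `C` (facilities drawn from `F`). -/
def IsPathwiseCover {V : Type*} (A : V → V → Prop) (w : V → V → ℝ) (C F F' : Set V) : Prop :=
  F' ⊆ F ∧ ∀ c ∈ C, c ∉ F' → ∃ f₁ ∈ F', ∃ f₂ ∈ F', f₁ ≠ f₂ ∧ f₁ ≠ c ∧ f₂ ≠ c ∧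
    CoversPathwise A w c f₁ f₂

/-- `F'` is a setwise-disjoint cover for the customers `C` (facilities drawn from `F`). -/
def IsSetwiseCover {V : Type*} (A : V → V → Prop) (w : V → V → ℝ) (C F F' : Set V) : Prop :=
  F' ⊆ F ∧ ∀ c ∈ C, c ∉ F' → ∃ f₁ ∈ F', ∃ f₂ ∈ F', f₁ ≠ f₂ ∧ f₁ ≠ c ∧ f₂ ≠ c ∧
    CoversSetwise A w c f₁ f₂

/-- `spNbrs A w c f` : the set `N(c,f)` of out-neighbours `x` of `c` that lie on
some shortest path from `c` to `f`. -/
def spNbrs {V : Type*} (A : V → V → Prop) (w : V → V → ℝ) (c f : V) : Set V :=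
  {x | A c x ∧ ∃ p, IsShortestDiPath A w c f p ∧ x ∈ p}

namespace CoversAux

variable {V : Type*}

lemma pw_nil (w : V → V → ℝ) : pathWeight w ([] : List V) = 0 := rfl

lemma pw_single (w : V → V → ℝ) (a : V) : pathWeight w [a] = 0 := rfl

lemma pw_cons₂ (w : V → V → ℝ) (a b : V) (l : List V) :
    pathWeight w (a :: b :: l) = w a b + pathWeight w (b :: l) := rfl

lemma pw_append (w : V → V → ℝ) :
    ∀ (xs : List V) (v : V) (ys : List V),
      pathWeight w (xs ++ v :: ys) = pathWeight w (xs ++ [v]) + pathWeight w (v :: ys)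
  | [], v, ys => by simp [pw_single]
  | [x], v, ys => by simp [pw_cons₂, pw_single]
  | x :: y :: xs, v, ys => by
    have ih := pw_append w (y :: xs) v ys
    simp only [List.cons_append, pw_cons₂] at ih ⊢
    rw [ih]; ring

lemma pw_nonneg {A : V → V → Prop} (w : V → V → ℝ) (hw : ∀ x y, A x y → 0 ≤ w x y) :
    ∀ l : List V, List.Chain' A l → 0 ≤ pathWeight w l
  | [], _ => le_of_eq rfl
  | [_], _ => le_of_eq rfl
  | a :: b :: l, h => by
    rw [pw_cons₂]
    obtain ⟨hab, h2⟩ := List.isChain_cons_cons.mp h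
    have := pw_nonneg w hw (b :: l) h2
    have := hw a b hab
    linarith

lemma nodup_append_cons_inj {x : V} :
    ∀ {a a' b b' : List V}, (a ++ x :: b).Nodup → a ++ x :: b = a' ++ x :: b' →
      a = a' ∧ b = b'
  | [], [], b, b', _, heq => by simpa using heq
  | [], y :: a'', b, b', hnd, heq => by
    simp only [List.nil_append, List.cons_append, List.cons.injEq] at heq
    obtain ⟨rfl, heq⟩ := heq
    simp only [List.nil_append, List.nodup_cons] at hnd
    exact absurd (by rw [heq]; exact List.mem_append.mpr (Or.inr (List.mem_cons_self))) hnd.1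
  | z :: a₀, [], b, b', hnd, heq => by
    simp only [List.nil_append, List.cons_append, List.cons.injEq] at heq
    obtain ⟨rfl, -⟩ := heq
    simp only [List.cons_append, List.nodup_cons] at hnd
    exact absurd (List.mem_append.mpr (Or.inr (List.mem_cons_self))) hnd.1
  | z :: a₀, z' :: a₀', b, b', hnd, heq => by
    simp only [List.cons_append, List.cons.injEq] at heq
    obtain ⟨rfl, heq⟩ := heq
    simp only [List.cons_append, List.nodup_cons] at hnd
    obtain ⟨h1, h2⟩ := nodup_append_cons_inj hnd.2 heq
    exact ⟨by rw [h1], h2⟩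

lemma prefix_mono {A : V → V → Prop} {w : V → V → ℝ} (hw : ∀ x y, A x y → 0 ≤ w x y)
    {l l₁ l₂ m n : List V} {u v : V} (hch : List.Chain' A l) (hnd : l.Nodup)
    (h1 : l = l₁ ++ u :: m) (h2 : l = l₂ ++ v :: n) (hvm : v ∈ u :: m) :
    pathWeight w (l₁ ++ [u]) ≤ pathWeight w (l₂ ++ [v]) := by
  rcases List.mem_cons.mp hvm with rfl | hv
  · obtain ⟨h, -⟩ := nodup_append_cons_inj (h1 ▸ hnd) (h1 ▸ h2)
    rw [h]
  · obtain ⟨m₁, m₂, rfl⟩ := List.append_of_mem hv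
    have h1' : l = (l₁ ++ u :: m₁) ++ v :: m₂ := by rw [h1]; simp
    have hnd' : (l₂ ++ v :: n).Nodup := h2 ▸ hnd
    obtain ⟨he, -⟩ := nodup_append_cons_inj hnd' (h2.symm.trans h1')
    rw [he]
    have hassoc : (l₁ ++ u :: m₁) ++ [v] = l₁ ++ u :: (m₁ ++ [v]) := by simp
    rw [hassoc]
    have hsplit := pw_append w l₁ u (m₁ ++ [v])
    have hchm : List.Chain' A (u :: (m₁ ++ [v])) := by
      apply hch.infix
      rw [h1']
      exact ⟨l₁, m₂, by simp⟩
    have hnn := pw_nonneg w hw _ hchm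
    linarith

lemma dropWhile_head_false {α : Type*} (P : α → Bool) :
    ∀ (l : List α) (a : α) (t : List α), l.dropWhile P = a :: t → P a = false
  | [], a, t, h => by simp at h
  | x :: l, a, t, h => by
    rw [List.dropWhile_cons] at h
    split at h
    · exact dropWhile_head_false P l a t h
    · cases h; simpa using ‹¬ P x = true›

lemma splice {A : V → V → Prop} {c f g : V}
    {p q : List V} (hp : IsDiPath A c f p) (hq : IsDiPath A c g q)
    {v₀ : V} (hv₀p : v₀ ∈ p) (hv₀q : v₀ ∈ q) (hv₀c : v₀ ≠ c) :
    ∃ v s r e h, p = c :: (s ++ v :: r) ∧ q = e ++ v :: h ∧ v ≠ c ∧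
      (∀ x ∈ s, x ∉ q) ∧ IsDiPath A c g (c :: (s ++ v :: h)) ∧
      ∃ x, A c x ∧ x ∈ p ∧ x ∈ c :: (s ++ v :: h) := by
  classical
  obtain ⟨hph, hpl, hpc, hpn⟩ := hp
  obtain ⟨hqh, hql, hqc, hqn⟩ := hq
  obtain ⟨t, rfl⟩ : ∃ t, p = c :: t := by
    cases p with
    | nil => simp at hph
    | cons a t => simp only [List.head?_cons, Option.some.injEq] at hph; exact ⟨t, by rw [hph]⟩
  have hct : c ∉ t := (List.nodup_cons.mp hpn).1
  have hv₀t : v₀ ∈ t := by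
    rcases List.mem_cons.mp hv₀p with h | h
    · exact absurd h hv₀c
    · exact h
  set s := t.takeWhile (fun x => decide (x ∉ q)) with hs
  set d := t.dropWhile (fun x => decide (x ∉ q)) with hd
  have htsd : s ++ d = t := List.takeWhile_append_dropWhile
  have hsq : ∀ x ∈ s, x ∉ q := fun x hx => by
    have := List.mem_takeWhile_imp hx
    simpa using this
  have hdne : d ≠ [] := by
    intro hnil
    rw [hnil, List.append_nil] at htsd
    exact hsq v₀ (htsd ▸ hv₀t) hv₀q
  obtain ⟨v, r, hvr⟩ := List.exists_cons_of_ne_nil hdne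
  have hvq : v ∈ q := by
    have := dropWhile_head_false (fun x => decide (x ∉ q)) t v r (hd ▸ hvr)
    simpa using this
  have ht : t = s ++ v :: r := by rw [← htsd, hvr]
  have hvt : v ∈ t := ht ▸ List.mem_append.mpr (Or.inr (List.mem_cons_self))
  have hvc : v ≠ c := fun h => hct (h ▸ hvt)
  clear_value s d
  obtain ⟨e, h, hq_eq⟩ := List.append_of_mem hvq
  refine ⟨v, s, r, e, h, by rw [ht], hq_eq, hvc, hsq, ?_, ?_⟩
  · -- IsDiPath A c g (c :: (s ++ v :: h))
    have hnds : List.Nodup (c :: t) := hpn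
    rw [ht] at hnds hpc
    have hpc' : List.Chain' A ((c :: s) ++ (v :: r)) := hpc
    obtain ⟨hc1, -, hc3⟩ := List.isChain_append.mp hpc'
    have hqc' : List.Chain' A (e ++ (v :: h)) := hq_eq ▸ hqc
    obtain ⟨-, hcvh, -⟩ := List.isChain_append.mp hqc'
    -- c ∉ h
    obtain ⟨e', rfl⟩ : ∃ e', e = c :: e' := by
      cases e with
      | nil =>
        rw [hq_eq] at hqh
        simp only [List.nil_append, List.head?_cons, Option.some.injEq] at hqh
        exact absurd hqh hvc
      | cons y e' =>
        rw [hq_eq] at hqh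
        simp only [List.cons_append, List.head?_cons, Option.some.injEq] at hqh
        exact ⟨e', by rw [hqh]⟩
    have hqn' : List.Nodup (c :: (e' ++ v :: h)) := by
      rw [hq_eq] at hqn; exact hqn
    have hcmem : c ∉ e' ++ v :: h := (List.nodup_cons.mp hqn').1
    have hch : c ∉ v :: h := fun hm => hcmem (List.mem_append.mpr (Or.inr hm))
    have hndvh : List.Nodup (v :: h) :=
      ((List.nodup_append.mp (List.nodup_cons.mp hqn').2).2.1)
    have hnds' := List.nodup_cons.mp hnds
    have hnds'' := List.nodup_append.mp hnds'.2
    refine ⟨rfl, ?_, ?_, ?_⟩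
    · -- getLast?
      rw [hq_eq] at hql
      rw [List.getLast?_append_cons] at hql
      show List.getLast? ((c :: s) ++ (v :: h)) = some g
      rw [List.getLast?_append_cons]
      exact hql
    · -- Chain'
      show List.Chain' A ((c :: s) ++ (v :: h))
      refine List.isChain_append.mpr ⟨hc1, hcvh, ?_⟩
      intro x hx y hy
      simp only [List.head?_cons, Option.mem_def, Option.some.injEq] at hy
      subst hy
      exact hc3 x hx v (by simp)
    · -- Nodup
      rw [List.nodup_cons]
      constructor
      · intro hmem
        rcases List.mem_append.mp hmem with h1 | h1
        · exact hnds'.1 (List.mem_append.mpr (Or.inl h1))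
        · exact hch h1
      · refine List.nodup_append.mpr ⟨hnds''.1, hndvh, ?_⟩
        intro x hxs y hxvh hxy
        subst hxy
        exact hsq x hxs (hq_eq ▸ List.mem_append.mpr (Or.inr hxvh))
  · -- the out-neighbour x
    cases s with
    | nil =>
      refine ⟨v, ?_, by rw [ht]; simp, by simp⟩
      rw [ht] at hpc
      simp only [List.nil_append] at hpc
      exact (List.isChain_cons_cons.mp hpc).1
    | cons a s' =>
      refine ⟨a, ?_, by rw [ht]; simp, by simp⟩
      rw [ht] at hpc
      simp only [List.cons_append] at hpc
      exact (List.isChain_cons_cons.mp hpc).1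

end CoversAux

/-- In a loopless digraph with nonnegative arc weights, a pair
`{f₁,f₂}` of facilities with `c ∉ {f₁,f₂}` covers the customer `c` in a
setwise-disjoint fashion iff `N(c,f₁) ∩ N(c,f₂) = ∅`. -/
theorem coversSetwise_iff_spNbrs_disjoint
    {V : Type*} (A : V → V → Prop) (w : V → V → ℝ)
    (hw : ∀ x y, A x y → 0 ≤ w x y) (hirr : ∀ v, ¬ A v v)
    (c f₁ f₂ : V) (hc₁ : c ≠ f₁) (hc₂ : c ≠ f₂) (h₁₂ : f₁ ≠ f₂) :
    CoversSetwise A w c f₁ f₂ ↔ spNbrs A w c f₁ ∩ spNbrs A w c f₂ = ∅ := by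
  classical
  constructor
  · intro hcov
    ext x
    simp only [Set.mem_inter_iff, Set.mem_empty_iff_false, iff_false, not_and]
    rintro ⟨hA1, p₁, hp₁, hx₁⟩ ⟨hA2, p₂, hp₂, hx₂⟩
    have hxc := hcov p₁ p₂ hp₁ hp₂ x hx₁ hx₂
    exact hirr c (hxc ▸ hA1)
  · intro hdisj p₁ p₂ hp₁ hp₂ v₀ hv₁ hv₂
    by_contra hne
    obtain ⟨v, s₁, r₁, e₂, g₂, hP1, hP2, hvc, hs₁, hQ2, x₁, hx₁A, hx₁p, hx₁q⟩ :=
      CoversAux.splice hp₁.1 hp₂.1 hv₁ hv₂ hne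
    obtain ⟨u, s₂, r₂, e₁, g₁, hP2', hP1', huc, hs₂, hQ1, x₂, hx₂A, hx₂p, hx₂q⟩ :=
      CoversAux.splice hp₂.1 hp₁.1 hv₂ hv₁ hne
    have w1 : pathWeight w p₁
        = pathWeight w ((c :: s₁) ++ [v]) + pathWeight w (v :: r₁) := by
      rw [hP1]; exact CoversAux.pw_append w (c :: s₁) v r₁
    have w2 : pathWeight w p₂
        = pathWeight w (e₂ ++ [v]) + pathWeight w (v :: g₂) := by
      rw [hP2]; exact CoversAux.pw_append w e₂ v g₂
    have w1' : pathWeight w p₁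
        = pathWeight w (e₁ ++ [u]) + pathWeight w (u :: g₁) := by
      rw [hP1']; exact CoversAux.pw_append w e₁ u g₁
    have w2' : pathWeight w p₂
        = pathWeight w ((c :: s₂) ++ [u]) + pathWeight w (u :: r₂) := by
      rw [hP2']; exact CoversAux.pw_append w (c :: s₂) u r₂
    have wq2 : pathWeight w (c :: (s₁ ++ v :: g₂))
        = pathWeight w ((c :: s₁) ++ [v]) + pathWeight w (v :: g₂) :=
      CoversAux.pw_append w (c :: s₁) v g₂
    have wq1 : pathWeight w (c :: (s₂ ++ u :: g₁))
        = pathWeight w ((c :: s₂) ++ [u]) + pathWeight w (u :: g₁) :=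
      CoversAux.pw_append w (c :: s₂) u g₁
    have hvp₁ : v ∈ p₁ := by
      rw [hP1]; exact List.mem_cons_of_mem _ (List.mem_append.mpr (Or.inr (List.mem_cons_self)))
    have hup₂ : u ∈ p₂ := by
      rw [hP2']; exact List.mem_cons_of_mem _ (List.mem_append.mpr (Or.inr (List.mem_cons_self)))
    rcases le_or_gt (pathWeight w ((c :: s₁) ++ [v])) (pathWeight w (e₂ ++ [v])) with hle | hgt
    · have hsp : IsShortestDiPath A w c f₂ (c :: (s₁ ++ v :: g₂)) := by
        refine ⟨hQ2, fun q hq => ?_⟩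
        have h1 : pathWeight w (c :: (s₁ ++ v :: g₂)) ≤ pathWeight w p₂ := by
          rw [wq2, w2]; linarith
        exact le_trans h1 (hp₂.2 q hq)
      have hmem : x₁ ∈ spNbrs A w c f₁ ∩ spNbrs A w c f₂ :=
        ⟨⟨hx₁A, p₁, hp₁, hx₁p⟩, ⟨hx₁A, _, hsp, hx₁q⟩⟩
      rw [hdisj] at hmem
      exact hmem
    · rcases le_or_gt (pathWeight w ((c :: s₂) ++ [u])) (pathWeight w (e₁ ++ [u])) with hle' | hgt'
      · have hsp : IsShortestDiPath A w c f₁ (c :: (s₂ ++ u :: g₁)) := by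
          refine ⟨hQ1, fun q hq => ?_⟩
          have h1 : pathWeight w (c :: (s₂ ++ u :: g₁)) ≤ pathWeight w p₁ := by
            rw [wq1, w1']; linarith
          exact le_trans h1 (hp₁.2 q hq)
        have hmem : x₂ ∈ spNbrs A w c f₁ ∩ spNbrs A w c f₂ :=
          ⟨⟨hx₂A, _, hsp, hx₂q⟩, ⟨hx₂A, p₂, hp₂, hx₂p⟩⟩
        rw [hdisj] at hmem
        exact hmem
      · -- both strict: contradiction via prefix monotonicity
        have hvm : v ∈ u :: r₂ := by
          have hvp₂ : v ∈ p₂ := by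
            rw [hP2]; exact List.mem_append.mpr (Or.inr (List.mem_cons_self))
          rw [hP2'] at hvp₂
          rcases List.mem_cons.mp hvp₂ with h | h
          · exact absurd h hvc
          · rcases List.mem_append.mp h with h | h
            · exact absurd hvp₁ (hs₂ v h)
            · exact h
        have hum : u ∈ v :: r₁ := by
          have hup₁ : u ∈ p₁ := by
            rw [hP1']; exact List.mem_append.mpr (Or.inr (List.mem_cons_self))
          rw [hP1] at hup₁
          rcases List.mem_cons.mp hup₁ with h | h
          · exact absurd h huc
          · rcases List.mem_append.mp h with h | h
            · exact absurd hup₂ (hs₁ u h)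
            · exact h
        have hm2 : pathWeight w ((c :: s₂) ++ [u]) ≤ pathWeight w (e₂ ++ [v]) :=
          CoversAux.prefix_mono hw hp₂.1.2.2.1 hp₂.1.2.2.2
            (show p₂ = (c :: s₂) ++ u :: r₂ from hP2') hP2 hvm
        have hm1 : pathWeight w ((c :: s₁) ++ [v]) ≤ pathWeight w (e₁ ++ [u]) :=
          CoversAux.prefix_mono hw hp₁.1.2.2.1 hp₁.1.2.2.2
            (show p₁ = (c :: s₁) ++ v :: r₁ from hP1) hP1' hum
        linarith
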